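/- arXiv:1007.2388 — 2 statements merged into one kernel-verified Lean document; each statement's English description precedes it below -/
import Mathlib

section
/- Define g : ℝ → ℝ by g(y) = y·log(|y|/(1+|y|)) for y ≠ 0 and g(0) = 0. Then g is monotone decreasing in the sense that (y - y')·(g(y) - g(y')) ≤ 0 for all y, y' ∈ ℝ. -/
noncomputable def g₂ (y : ℝ) : ℝ := if y = 0 then 0 else y * Real.log (|y| / (1 + |y|))

lemma g2_odd (y : ℝ) : g₂ (-y) = - g₂ y := by
  unfold g₂
  by_cases h : y = 0
  · simp [h]
  · rw [if_neg h, if_neg (neg_ne_zero.mpr h)]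
    simp [abs_neg]

noncomputable def f₂ (y : ℝ) : ℝ := y * Real.log y - y * Real.log (1 + y)

lemma g2_eq_f2 {y : ℝ} (hy : 0 ≤ y) : g₂ y = f₂ y := by
  unfold g₂ f₂
  by_cases h : y = 0
  · simp [h]
  · rw [if_neg h, abs_of_nonneg hy, Real.log_div h (by positivity)]
    ring

lemma f2_anti : AntitoneOn f₂ (Set.Ici 0) := by
  have hcont : ContinuousOn f₂ (Set.Ici 0) := by
    apply ContinuousOn.sub
    · exact Real.continuous_mul_log.continuousOn
    · exact continuousOn_id.mul ((Real.continuousOn_log.comp (by fun_prop)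
        (fun x hx => by simp only [Set.mem_Ici] at hx; simp only [Set.mem_compl_iff, Set.mem_singleton_iff]; positivity)))
  have hderiv : ∀ x ∈ interior (Set.Ici (0:ℝ)), HasDerivAt f₂
      (Real.log x + 1 - (Real.log (1 + x) + x / (1 + x))) x := by
    intro x hx
    rw [interior_Ici] at hx
    have hx0 : (0:ℝ) < x := hx
    have h1x : (0:ℝ) < 1 + x := by linarith
    have h1 : HasDerivAt (fun y : ℝ => y * Real.log y) (Real.log x + 1) x := by
      have := (hasDerivAt_id x).mul (Real.hasDerivAt_log hx0.ne')
      refine this.congr_deriv ?_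
      simp [hx0.ne']
    have h2 : HasDerivAt (fun y : ℝ => y * Real.log (1 + y))
        (Real.log (1 + x) + x / (1 + x)) x := by
      have hl : HasDerivAt (fun y : ℝ => Real.log (1 + y)) (1 / (1 + x)) x := by
        have := (Real.hasDerivAt_log h1x.ne').comp x
          ((hasDerivAt_const x (1:ℝ)).add (hasDerivAt_id x))
        simpa [Function.comp_def] using this
      have := (hasDerivAt_id x).mul hl
      refine this.congr_deriv ?_
      simp only [id_eq]; ring
    exact h1.sub h2
  apply antitoneOn_of_deriv_nonpos (convex_Ici 0) hcont
  · intro x hx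
    exact ((hderiv x hx).differentiableAt).differentiableWithinAt
  · intro x hx
    rw [(hderiv x hx).deriv]
    rw [interior_Ici] at hx
    have hx0 : (0:ℝ) < x := hx
    have h1x : (0:ℝ) < 1 + x := by linarith
    have ht : (0:ℝ) < x / (1 + x) := by positivity
    have hlog : Real.log (x / (1 + x)) ≤ x / (1 + x) - 1 :=
      Real.log_le_sub_one_of_pos ht
    rw [Real.log_div hx0.ne' h1x.ne'] at hlog
    linarith

lemma g2_anti : ∀ a b : ℝ, a ≤ b → g₂ b ≤ g₂ a := by
  have key : ∀ a b : ℝ, 0 ≤ a → a ≤ b → g₂ b ≤ g₂ a := by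
    intro a b ha hab
    rw [g2_eq_f2 ha, g2_eq_f2 (ha.trans hab)]
    exact f2_anti ha (ha.trans hab) hab
  intro a b hab
  rcases le_or_gt 0 a with ha | ha
  · exact key a b ha hab
  · rcases le_or_gt 0 b with hb | hb
    · have h1 : g₂ b ≤ g₂ 0 := key 0 b le_rfl hb
      have h2 : g₂ (-a) ≤ g₂ 0 := key 0 (-a) le_rfl (by linarith)
      have h0 : g₂ 0 = 0 := by simp [g₂]
      have := g2_odd a
      nlinarith [h1, h2]
    · have := key (-b) (-a) (by linarith) (by linarith)
      rw [g2_odd, g2_odd] at this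
      linarith

theorem stmt_7 : ∀ y y' : ℝ, (y - y') * (g₂ y - g₂ y') ≤ 0 := by
  intro y y'
  rcases le_or_gt y' y with h | h
  · have := g2_anti y' y h
    nlinarith
  · have := g2_anti y y' h.le
    nlinarith
end

section
/- Define g : ℝ^d → ℝ^d by g(y) = y·log(|y|/(1+|y|)) for y ≠ 0 and g(0) = 0, where |·| is the Euclidean norm. Then ⟨y - y', g(y) - g(y')⟩ ≤ 0 for all y, y' ∈ ℝ^d. -/
open RealInnerProductSpace

open scoped Classical in
noncomputable def gd (d : ℕ) (v : EuclideanSpace ℝ (Fin d)) : EuclideanSpace ℝ (Fin d) :=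
  if v = 0 then 0 else Real.log (‖v‖ / (1 + ‖v‖)) • v

lemma gd_eq (d : ℕ) (v : EuclideanSpace ℝ (Fin d)) :
    gd d v = Real.log (‖v‖ / (1 + ‖v‖)) • v := by
  unfold gd
  split_ifs with h
  · simp [h]
  · rfl

lemma phi_antitone : AntitoneOn (fun t : ℝ => t * Real.log (t / (1 + t))) (Set.Ici 0) := by
  have hcong : ∀ t ∈ Set.Ici (0:ℝ),
      (fun t : ℝ => t * Real.log t - t * Real.log (1 + t)) t
        = (fun t : ℝ => t * Real.log (t / (1 + t))) t := by
    intro t ht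
    rcases eq_or_lt_of_le (Set.mem_Ici.mp ht) with h | h
    · simp [← h]
    · have h1 : (1:ℝ) + t > 0 := by linarith
      simp only
      rw [Real.log_div (ne_of_gt h) (ne_of_gt h1)]
      ring
  have hcont : ContinuousOn (fun t : ℝ => t * Real.log (t / (1 + t))) (Set.Ici 0) := by
    apply ContinuousOn.congr _ (fun t ht => (hcong t ht).symm)
    apply ContinuousOn.sub
    · exact Real.continuous_mul_log.continuousOn
    · apply ContinuousOn.mul continuousOn_id
      apply Real.continuousOn_log.comp (by fun_prop)
      intro t ht
      simp only [Set.mem_Ici] at ht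
      simp only [Set.mem_compl_iff, Set.mem_singleton_iff]
      intro h; linarith
  apply antitoneOn_of_deriv_nonpos (convex_Ici 0) hcont
  · intro t ht
    rw [interior_Ici] at ht
    have htpos : (0:ℝ) < t := ht
    have h1 : (0:ℝ) < 1 + t := by linarith
    have hd : HasDerivAt (fun t : ℝ => t * Real.log (t / (1 + t)))
        (1 * Real.log (t / (1 + t)) +
          t * ((t / (1 + t))⁻¹ * ((1 * (1 + t) - t * (0 + 1)) / (1 + t) ^ 2))) t := by
      have hdiv : HasDerivAt (fun t : ℝ => t / (1 + t))
          ((1 * (1 + t) - t * (0 + 1)) / (1 + t) ^ 2) t :=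
        (hasDerivAt_id t).div ((hasDerivAt_const t 1).add (hasDerivAt_id t)) (ne_of_gt h1)
      have hu : (0:ℝ) < t / (1 + t) := div_pos htpos h1
      have hlog := (Real.hasDerivAt_log (ne_of_gt hu)).comp t hdiv
      exact (hasDerivAt_id t).mul hlog
    exact hd.differentiableAt.differentiableWithinAt
  · intro t ht
    rw [interior_Ici] at ht
    have htpos : (0:ℝ) < t := ht
    have h1 : (0:ℝ) < 1 + t := by linarith
    have hu : (0:ℝ) < t / (1 + t) := div_pos htpos h1
    have hd : HasDerivAt (fun t : ℝ => t * Real.log (t / (1 + t)))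
        (1 * Real.log (t / (1 + t)) +
          t * ((t / (1 + t))⁻¹ * ((1 * (1 + t) - t * (0 + 1)) / (1 + t) ^ 2))) t := by
      have hdiv : HasDerivAt (fun t : ℝ => t / (1 + t))
          ((1 * (1 + t) - t * (0 + 1)) / (1 + t) ^ 2) t :=
        (hasDerivAt_id t).div ((hasDerivAt_const t 1).add (hasDerivAt_id t)) (ne_of_gt h1)
      have hlog := (Real.hasDerivAt_log (ne_of_gt hu)).comp t hdiv
      exact (hasDerivAt_id t).mul hlog
    rw [hd.deriv]
    have hsimp : t * ((t / (1 + t))⁻¹ * ((1 * (1 + t) - t * (0 + 1)) / (1 + t) ^ 2))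
        = 1 / (1 + t) := by
      field_simp
      ring
    rw [hsimp]
    have hlog_le : Real.log (t / (1 + t)) ≤ t / (1 + t) - 1 :=
      Real.log_le_sub_one_of_pos hu
    have : t / (1 + t) - 1 + 1 / (1 + t) = 0 := by field_simp; ring
    linarith

theorem stmt_8 (d : ℕ) (y y' : EuclideanSpace ℝ (Fin d)) :
    ⟪y - y', gd d y - gd d y'⟫ ≤ 0 := by
  set r := ‖y‖ with hr
  set s := ‖y'‖ with hs
  set a := Real.log (r / (1 + r)) with ha
  set b := Real.log (s / (1 + s)) with hb
  have hr0 : (0:ℝ) ≤ r := norm_nonneg _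
  have hs0 : (0:ℝ) ≤ s := norm_nonneg _
  have ha0 : a ≤ 0 := Real.log_nonpos (by positivity) (by
    rw [div_le_one (by linarith)]; linarith)
  have hb0 : b ≤ 0 := Real.log_nonpos (by positivity) (by
    rw [div_le_one (by linarith)]; linarith)
  have hexp : ⟪y - y', gd d y - gd d y'⟫
      = a * r ^ 2 + b * s ^ 2 - (a + b) * ⟪y, y'⟫ := by
    rw [gd_eq, gd_eq, ← ha, ← hb]
    rw [inner_sub_left, inner_sub_right, inner_sub_right,
      real_inner_smul_right, real_inner_smul_right,
      real_inner_smul_right, real_inner_smul_right,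
      real_inner_self_eq_norm_sq, real_inner_self_eq_norm_sq,
      real_inner_comm y' y]
    ring
  have hcs : ⟪y, y'⟫ ≤ r * s := real_inner_le_norm y y'
  have hstep : ⟪y - y', gd d y - gd d y'⟫ ≤ (r - s) * (r * a - s * b) := by
    rw [hexp]
    nlinarith [hcs, ha0, hb0]
  have hmono : (r - s) * (r * a - s * b) ≤ 0 := by
    rcases le_total s r with h | h
    · have := phi_antitone (Set.mem_Ici.mpr hs0) (Set.mem_Ici.mpr hr0) h
      simp only [← ha, ← hb] at this
      nlinarith
    · have := phi_antitone (Set.mem_Ici.mpr hr0) (Set.mem_Ici.mpr hs0) h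
      simp only [← ha, ← hb] at this
      nlinarith
  linarith
end
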